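/- Let D₁, D₂, D₃ be three pairwise vertex-disjoint digraphs, each with a Hamiltonian cycle, and let D be a generalized sum of D₁, D₂, D₃. If there is a cyclic ordering (i₁, i₂, i₃) of {1,2,3} such that in D all exterior arcs go from D_{i₁} to D_{i₂}, from D_{i₂} to D_{i₃}, and from D_{i₃} to D_{i₁} (i.e., D_{i₁} ↦ D_{i₂}, D_{i₂} ↦ D_{i₃}, D_{i₃} ↦ D_{i₁}), then D is vertex-pancyclic. -/

import Mathlib

/-- A directed cycle of length `k` passing through `v`. -/
def CycleThru {V : Type*} (A : V → V → Prop) (k : ℕ) (v : V) : Prop :=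
  ∃ z : ZMod k → V, Function.Injective z ∧ (∀ i, A (z i) (z (i + 1))) ∧ ∃ i, z i = v

/-- `D` is a generalized sum with vertex set `U` of the family of induced subdigraphs on
the sets `S i`: the parts are pairwise disjoint, cover `U`, and between vertices of
different parts there is exactly one arc. -/
def GenSumFam {V ι : Type*} (A : V → V → Prop) (U : Set V) (S : ι → Set V) : Prop :=
  (Pairwise fun i j => Disjoint (S i) (S j)) ∧ (⋃ i, S i) = U ∧
    ∀ i j, i ≠ j → ∀ u ∈ S i, ∀ v ∈ S j, Xor' (A u v) (A v u)

/-- The set `s` carries a Hamiltonian (spanning) directed cycle. -/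
def HamOn {V : Type*} (A : V → V → Prop) (s : Set V) : Prop :=
  ∃ n : ℕ, 2 ≤ n ∧ ∃ z : ZMod n → V, Function.Injective z ∧
    (∀ i, A (z i) (z (i + 1))) ∧ Set.range z = s

/-- `s ↦ t`: every vertex of `s` sends an arc to every vertex of `t`,
and there are no arcs from `t` to `s`. -/
def MWhole {V : Type*} (A : V → V → Prop) (s t : Set V) : Prop :=
  ∀ u ∈ s, ∀ v ∈ t, A u v ∧ ¬ A v u


lemma core7 {V : Type*} (A : V → V → Prop)
    (n0 n1 n2 a0 a1 a2 : ℕ)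
    (h01 : 1 ≤ a0) (h0n : a0 ≤ n0) (h11 : 1 ≤ a1) (h1n : a1 ≤ n1)
    (h21 : 1 ≤ a2) (h2n : a2 ≤ n2)
    (z0 : ZMod n0 → V) (z1 : ZMod n1 → V) (z2 : ZMod n2 → V)
    (inj0 : Function.Injective z0) (inj1 : Function.Injective z1)
    (inj2 : Function.Injective z2)
    (arc0 : ∀ i, A (z0 i) (z0 (i+1))) (arc1 : ∀ i, A (z1 i) (z1 (i+1)))
    (arc2 : ∀ i, A (z2 i) (z2 (i+1)))
    (d01 : Disjoint (Set.range z0) (Set.range z1))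
    (d12 : Disjoint (Set.range z1) (Set.range z2))
    (d02 : Disjoint (Set.range z0) (Set.range z2))
    (m01 : MWhole A (Set.range z0) (Set.range z1))
    (m12 : MWhole A (Set.range z1) (Set.range z2))
    (m20 : MWhole A (Set.range z2) (Set.range z0))
    (k : ℕ) (hk : k = a0 + a1 + a2) :
    CycleThru A k (z0 0) := by
  haveI : NeZero k := ⟨by omega⟩
  haveI : NeZero n0 := ⟨by omega⟩
  haveI : NeZero n1 := ⟨by omega⟩
  haveI : NeZero n2 := ⟨by omega⟩
  set f : ℕ → V := fun t =>
    if t < a0 then z0 ((t : ℕ) : ZMod n0)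
    else if t < a0 + a1 then z1 ((t - a0 : ℕ) : ZMod n1)
    else z2 ((t - a0 - a1 : ℕ) : ZMod n2) with hf
  have hf0 : ∀ t, t < a0 → f t = z0 ((t : ℕ) : ZMod n0) := by
    intro t ht; simp only [hf, if_pos ht]
  have hf1 : ∀ t, a0 ≤ t → t < a0 + a1 → f t = z1 ((t - a0 : ℕ) : ZMod n1) := by
    intro t h1 h2; simp only [hf]; rw [if_neg (by omega), if_pos h2]
  have hf2 : ∀ t, a0 + a1 ≤ t → f t = z2 ((t - a0 - a1 : ℕ) : ZMod n2) := by
    intro t h1; simp only [hf]; rw [if_neg (by omega), if_neg (by omega)]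
  have mem0 : ∀ t, t < a0 → f t ∈ Set.range z0 := fun t ht => (hf0 t ht) ▸ ⟨_, rfl⟩
  have mem1 : ∀ t, a0 ≤ t → t < a0 + a1 → f t ∈ Set.range z1 :=
    fun t h1 h2 => (hf1 t h1 h2) ▸ ⟨_, rfl⟩
  have mem2 : ∀ t, a0 + a1 ≤ t → f t ∈ Set.range z2 := fun t h1 => (hf2 t h1) ▸ ⟨_, rfl⟩
  refine ⟨fun i => f i.val, ?_, ?_, ⟨0, ?_⟩⟩
  · -- injectivity
    have key : ∀ s t, s < k → t < k → f s = f t → s = t := by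
      intro s t hs ht hft
      by_cases hs0 : s < a0 <;> by_cases ht0 : t < a0
      · rw [hf0 s hs0, hf0 t ht0] at hft
        have h := congrArg ZMod.val (inj0 hft)
        rwa [ZMod.val_cast_of_lt (by omega), ZMod.val_cast_of_lt (by omega)] at h
      · have hA : f t ∈ Set.range z0 := hft ▸ mem0 s hs0
        by_cases ht1 : t < a0 + a1
        · exact absurd hA (Set.disjoint_right.1 d01 (mem1 t (by omega) ht1))
        · exact absurd hA (Set.disjoint_right.1 d02 (mem2 t (by omega)))
      · have hA : f s ∈ Set.range z0 := hft.symm ▸ mem0 t ht0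
        by_cases hs1 : s < a0 + a1
        · exact absurd hA (Set.disjoint_right.1 d01 (mem1 s (by omega) hs1))
        · exact absurd hA (Set.disjoint_right.1 d02 (mem2 s (by omega)))
      · by_cases hs1 : s < a0 + a1 <;> by_cases ht1 : t < a0 + a1
        · rw [hf1 s (by omega) hs1, hf1 t (by omega) ht1] at hft
          have h := congrArg ZMod.val (inj1 hft)
          rw [ZMod.val_cast_of_lt (by omega), ZMod.val_cast_of_lt (by omega)] at h
          omega
        · have hA : f t ∈ Set.range z1 := hft ▸ mem1 s (by omega) hs1
          exact absurd (mem2 t (by omega)) (Set.disjoint_left.1 d12 hA)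
        · have hA : f s ∈ Set.range z1 := hft.symm ▸ mem1 t (by omega) ht1
          exact absurd (mem2 s (by omega)) (Set.disjoint_left.1 d12 hA)
        · rw [hf2 s (by omega), hf2 t (by omega)] at hft
          have h := congrArg ZMod.val (inj2 hft)
          rw [ZMod.val_cast_of_lt (by omega), ZMod.val_cast_of_lt (by omega)] at h
          omega
    intro i j hij
    exact ZMod.val_injective k (key _ _ (ZMod.val_lt i) (ZMod.val_lt j) hij)
  · -- arcs
    intro i
    simp only
    set s := i.val with hsdef
    have hs : s < k := ZMod.val_lt i
    have hi1 : (i + 1).val = (s + 1) % k := by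
      conv_lhs => rw [← ZMod.natCast_rightInverse (n := k) i]
      rw [show ((s : ℕ) : ZMod k) + 1 = ((s + 1 : ℕ) : ZMod k) by push_cast; ring,
        ZMod.val_natCast]
    by_cases hlast : s + 1 = k
    · -- wrap-around: from z2 segment back to z0 0
      rw [hi1, hlast, Nat.mod_self]
      have h2 : f s ∈ Set.range z2 := mem2 s (by omega)
      have h0 : f 0 ∈ Set.range z0 := mem0 0 (by omega)
      exact (m20 _ h2 _ h0).1
    · rw [hi1, Nat.mod_eq_of_lt (by omega)]
      by_cases c1 : s + 1 < a0
      · rw [hf0 s (by omega), hf0 (s+1) c1,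
          show ((s + 1 : ℕ) : ZMod n0) = ((s : ℕ) : ZMod n0) + 1 by push_cast; ring]
        exact arc0 _
      · by_cases c2 : s + 1 = a0
        · exact (m01 _ (mem0 s (by omega)) _ (mem1 (s+1) (by omega) (by omega))).1
        · by_cases c3 : s + 1 < a0 + a1
          · rw [hf1 s (by omega) (by omega), hf1 (s+1) (by omega) c3,
              show ((s + 1 - a0 : ℕ) : ZMod n1) = ((s - a0 : ℕ) : ZMod n1) + 1 by
                rw [show s + 1 - a0 = (s - a0) + 1 by omega]; push_cast; ring]
            exact arc1 _
          · by_cases c4 : s + 1 = a0 + a1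
            · exact (m12 _ (mem1 s (by omega) (by omega)) _ (mem2 (s+1) (by omega))).1
            · rw [hf2 s (by omega), hf2 (s+1) (by omega),
                show ((s + 1 - a0 - a1 : ℕ) : ZMod n2) = ((s - a0 - a1 : ℕ) : ZMod n2) + 1 by
                  rw [show s + 1 - a0 - a1 = (s - a0 - a1) + 1 by omega]; push_cast; ring]
              exact arc2 _
  · -- passes through z0 0
    simp only [ZMod.val_zero]
    rw [hf0 0 (by omega), Nat.cast_zero]


theorem stmt7 {V : Type*} [Fintype V] (A : V → V → Prop) (S : Fin 3 → Set V)
    (hgs : GenSumFam A Set.univ S) (hham : ∀ i, HamOn A (S i))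
    (σ : Equiv.Perm (Fin 3))
    (hcyc : ∀ j : Fin 3, MWhole A (S (σ j)) (S (σ (j + 1)))) :
    ∀ v : V, ∀ k : ℕ, 3 ≤ k → k ≤ Fintype.card V → CycleThru A k v := by
  obtain ⟨hdisj, hcover, -⟩ := hgs
  intro v k hk3 hkN
  have hv : v ∈ ⋃ i, S i := hcover ▸ Set.mem_univ v
  obtain ⟨_, ⟨i, rfl⟩, hvi⟩ := hv
  set j : Fin 3 := σ.symm i with hj
  have hij : σ j = i := σ.apply_symm_apply i
  obtain ⟨n0, hn0, w0, injw0, arcw0, hrw0⟩ := hham (σ j)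
  obtain ⟨n1, hn1, z1, inj1, arc1, hr1⟩ := hham (σ (j + 1))
  obtain ⟨n2, hn2, z2, inj2, arc2, hr2⟩ := hham (σ (j + 2))
  -- shift w0 so that it starts at v
  have hvw : v ∈ Set.range w0 := by rw [hrw0, hij]; exact hvi
  obtain ⟨i0, hi0⟩ := hvw
  set z0 : ZMod n0 → V := fun t => w0 (i0 + t) with hz0
  have inj0 : Function.Injective z0 := injw0.comp (add_right_injective i0)
  have arc0 : ∀ t, A (z0 t) (z0 (t + 1)) := by
    intro t
    simp only [hz0, ← add_assoc]
    exact arcw0 (i0 + t)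
  have hr0 : Set.range z0 = S (σ j) := by
    rw [← hrw0]
    ext x
    constructor
    · rintro ⟨t, rfl⟩; exact ⟨i0 + t, rfl⟩
    · rintro ⟨t, rfl⟩; exact ⟨t - i0, by simp [hz0]⟩
  have hz00 : z0 0 = v := by simp only [hz0, add_zero]; exact hi0
  -- Fin 3 index facts
  have e1 : ∀ a : Fin 3, a ≠ a + 1 := by decide
  have e2 : ∀ a : Fin 3, a ≠ a + 2 := by decide
  have e3 : ∀ a : Fin 3, a + 1 ≠ a + 2 := by decide
  have e4 : ∀ a : Fin 3, a + 1 + 1 = a + 2 := by decide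
  have e5 : ∀ a : Fin 3, a + 2 + 1 = a := by decide
  -- disjointness
  have d01 : Disjoint (Set.range z0) (Set.range z1) := by
    rw [hr0, hr1]; exact hdisj (fun h => e1 j (σ.injective h))
  have d12 : Disjoint (Set.range z1) (Set.range z2) := by
    rw [hr1, hr2]; exact hdisj (fun h => e3 j (σ.injective h))
  have d02 : Disjoint (Set.range z0) (Set.range z2) := by
    rw [hr0, hr2]; exact hdisj (fun h => e2 j (σ.injective h))
  -- domination
  have m01 : MWhole A (Set.range z0) (Set.range z1) := by rw [hr0, hr1]; exact hcyc j
  have m12 : MWhole A (Set.range z1) (Set.range z2) := by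
    have h := hcyc (j + 1); rw [e4 j] at h; rw [hr1, hr2]; exact h
  have m20 : MWhole A (Set.range z2) (Set.range z0) := by
    have h := hcyc (j + 2); rw [e5 j] at h; rw [hr2, hr0]; exact h
  -- cardinality: k ≤ n0 + n1 + n2
  haveI : NeZero n0 := ⟨by omega⟩
  haveI : NeZero n1 := ⟨by omega⟩
  haveI : NeZero n2 := ⟨by omega⟩
  have hcard : Fintype.card V ≤ n0 + n1 + n2 := by
    have hunion : (Set.univ : Set V) ⊆ Set.range z0 ∪ Set.range z1 ∪ Set.range z2 := by
      rw [← hcover]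
      rintro x ⟨_, ⟨m, rfl⟩, hx⟩
      have hm : m = σ j ∨ m = σ (j + 1) ∨ m = σ (j + 2) := by
        have tri : ∀ a b : Fin 3, b = a ∨ b = a + 1 ∨ b = a + 2 := by decide
        have : σ.symm m = j ∨ σ.symm m = j + 1 ∨ σ.symm m = j + 2 := tri j (σ.symm m)
        rcases this with h | h | h
        · left; rw [← σ.apply_symm_apply m, h]
        · right; left; rw [← σ.apply_symm_apply m, h]
        · right; right; rw [← σ.apply_symm_apply m, h]
      rcases hm with h | h | h
      · exact Or.inl (Or.inl (by rw [hr0, ← h]; exact hx))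
      · exact Or.inl (Or.inr (by rw [hr1, ← h]; exact hx))
      · exact Or.inr (by rw [hr2, ← h]; exact hx)
    have h0 : (Set.range z0).ncard = n0 := by
      rw [← Nat.card_coe_set_eq, Nat.card_range_of_injective inj0, Nat.card_zmod]
    have h1 : (Set.range z1).ncard = n1 := by
      rw [← Nat.card_coe_set_eq, Nat.card_range_of_injective inj1, Nat.card_zmod]
    have h2 : (Set.range z2).ncard = n2 := by
      rw [← Nat.card_coe_set_eq, Nat.card_range_of_injective inj2, Nat.card_zmod]
    calc Fintype.card V = (Set.univ : Set V).ncard := by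
          rw [Set.ncard_univ, Nat.card_eq_fintype_card]
      _ ≤ (Set.range z0 ∪ Set.range z1 ∪ Set.range z2).ncard :=
          Set.ncard_le_ncard hunion (Set.toFinite _)
      _ ≤ (Set.range z0 ∪ Set.range z1).ncard + (Set.range z2).ncard :=
          Set.ncard_union_le _ _
      _ ≤ (Set.range z0).ncard + (Set.range z1).ncard + (Set.range z2).ncard :=
          Nat.add_le_add_right (Set.ncard_union_le _ _) _
      _ = n0 + n1 + n2 := by rw [h0, h1, h2]
  -- choose segment lengths
  set a0 : ℕ := min n0 (k - 2) with ha0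
  set a1 : ℕ := min n1 (k - a0 - 1) with ha1
  set a2 : ℕ := k - a0 - a1 with ha2
  have hk' : k = a0 + a1 + a2 := by omega
  rw [← hz00]
  exact core7 A n0 n1 n2 a0 a1 a2 (by omega) (by omega) (by omega) (by omega) (by omega)
    (by omega) z0 z1 z2 inj0 inj1 inj2 arc0 arc1 arc2 d01 d12 d02 m01 m12 m20 k hk'
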